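/- (Pólya enumeration for a permutation group, as used for map configurations.) Let Γ be a finite group of permutations of a finite set V, let Y be a finite set of figures with weight function w : Y → ℕ, and let Γ act on the set of colorings Y^V by (γ·c)(v) = c(γ⁻¹(v)). The total weight W(c) = Σ_{v ∈ V} w(c(v)) is constant on each orbit. Then in the polynomial ring ℚ[x]: Σ_{O} x^{W(c_O)} = (1/|Γ|) · Σ_{γ ∈ Γ} Π_{k ≥ 1} ( Σ_{y ∈ Y} x^{k·w(y)} )^{c_k(γ)}, where the left-hand sum ranges over the orbits O of Γ on Y^V with c_O any representative of O, and c_k(γ) is the number of cycles of length k of γ acting on V (fixed points counting as cycles of length 1). -/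

import Mathlib

/-- The length of the orbit of `v` under the cyclic group generated by `γ`. -/
noncomputable def orbitLen {V : Type*} (γ : Equiv.Perm V) (v : V) : ℕ :=
  ({w | ∃ k : ℕ, (γ ^ k) v = w}).ncard

/-- `c_k(γ)`: the number of cycles of length `k` of the permutation `γ` (fixed points counting
as cycles of length 1). -/
noncomputable def cycleCount {V : Type*} (γ : Equiv.Perm V) (k : ℕ) : ℕ :=
  ({v | orbitLen γ v = k}).ncard / k

namespace PolyaAux

open Finset Polynomial

open scoped Classical

variable {V : Type*} [Fintype V] [DecidableEq V]

/-- The setoid on `V` identifying points in the same cycle of `γ`. -/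
def scs (γ : Equiv.Perm V) : Setoid V :=
  ⟨γ.SameCycle, ⟨fun x => Equiv.Perm.SameCycle.refl γ x, fun h => h.symm,
    fun h h' => h.trans h'⟩⟩

noncomputable instance (γ : Equiv.Perm V) : Fintype (Quotient (scs γ)) :=
  @Quotient.fintype V _ (scs γ) fun _ _ => Classical.dec _

/-- The cycle of `γ` corresponding to a class `q`, as a finset. -/
noncomputable def cls (γ : Equiv.Perm V) (q : Quotient (scs γ)) : Finset V :=
  Finset.univ.filter fun v => Quotient.mk (scs γ) v = q

lemma mem_cls {γ : Equiv.Perm V} {q : Quotient (scs γ)} {v : V} :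
    v ∈ cls γ q ↔ Quotient.mk (scs γ) v = q := by
  simp [cls]

lemma mk_eq_iff {γ : Equiv.Perm V} {u v : V} :
    Quotient.mk (scs γ) u = Quotient.mk (scs γ) v ↔ γ.SameCycle u v :=
  ⟨fun h => Quotient.exact h, fun h => Quotient.sound h⟩

lemma orbitLen_eq (γ : Equiv.Perm V) (v : V) :
    orbitLen γ v = (cls γ (Quotient.mk (scs γ) v)).card := by
  have hset : {w | ∃ k : ℕ, (γ ^ k) v = w}
      = ↑(cls γ (Quotient.mk (scs γ) v)) := by
    ext u
    simp only [Set.mem_setOf_eq, coe_filter, cls, Finset.mem_coe, mem_filter,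
      Finset.mem_univ, true_and]
    constructor
    · rintro ⟨k, rfl⟩
      exact mk_eq_iff.2 (Equiv.Perm.SameCycle.symm ⟨(k : ℤ), by simp⟩)
    · intro h
      obtain ⟨i, _, hi⟩ := (mk_eq_iff.1 h).symm.exists_pow_eq'
      exact ⟨i, hi⟩
  rw [orbitLen, hset, Set.ncard_coe_finset]

lemma card_cls_pos (γ : Equiv.Perm V) (q : Quotient (scs γ)) : 0 < (cls γ q).card := by
  refine Finset.card_pos.2 ⟨q.out, ?_⟩
  exact mem_cls.2 (Quotient.out_eq q)

lemma card_cls_le (γ : Equiv.Perm V) (q : Quotient (scs γ)) :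
    (cls γ q).card ≤ Fintype.card V :=
  Finset.card_le_univ _

/-- The number of cycles of length `k` equals `cycleCount γ k`. -/
lemma card_cls_filter (γ : Equiv.Perm V) (k : ℕ) :
    (Finset.univ.filter fun q : Quotient (scs γ) => (cls γ q).card = k).card
      = cycleCount γ k := by
  set t := Finset.univ.filter fun q : Quotient (scs γ) => (cls γ q).card = k with ht
  have hsetV : {v : V | orbitLen γ v = k}
      = ↑(Finset.univ.filter fun v : V => (cls γ (Quotient.mk (scs γ) v)).card = k) := by
    ext v; simp [orbitLen_eq]
  have hcard : ({v : V | orbitLen γ v = k}).ncard = t.card * k := by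
    rw [hsetV, Set.ncard_coe_finset]
    rw [Finset.card_eq_sum_card_fiberwise
      (f := Quotient.mk (scs γ)) (t := t)
      (fun v hv => by
        simp only [ht, Finset.mem_coe, mem_filter, Finset.mem_univ, true_and]
        exact (Finset.mem_filter.1 hv).2)]
    have hsum : ∀ q ∈ t, ((Finset.univ.filter fun v : V =>
        (cls γ (Quotient.mk (scs γ) v)).card = k).filter
          (fun v => Quotient.mk (scs γ) v = q)).card = k := by
      intro q hq
      have hq' : (cls γ q).card = k := (Finset.mem_filter.1 hq).2
      have heq : (Finset.univ.filter fun v : V =>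
          (cls γ (Quotient.mk (scs γ) v)).card = k).filter
            (fun v => Quotient.mk (scs γ) v = q) = cls γ q := by
        ext v
        simp only [Finset.mem_filter, Finset.mem_univ, true_and, mem_cls]
        constructor
        · rintro ⟨_, h⟩; exact h
        · intro h; exact ⟨by rw [h, hq'], h⟩
      rw [heq, hq']
    rw [Finset.sum_congr rfl hsum, Finset.sum_const, smul_eq_mul]
  rcases Nat.eq_zero_or_pos k with hk | hk
  · subst hk
    rw [cycleCount, Nat.div_zero]
    rw [Finset.card_eq_zero]
    ext q
    simp only [ht, Finset.mem_filter, Finset.mem_univ, true_and, Finset.notMem_empty,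
      iff_false]
    intro h
    have := card_cls_pos γ q
    omega
  · rw [cycleCount, hcard, Nat.mul_div_cancel _ hk]

variable {Y : Type*} [Fintype Y] [DecidableEq Y]

lemma fixed_const (γ : Equiv.Perm V) {c : V → Y} (hc : ∀ v, c (γ⁻¹ v) = c v)
    {u v : V} (h : γ.SameCycle u v) : c u = c v := by
  have hγ : ∀ x, c (γ x) = c x := fun x => by
    have := hc (γ x); simpa using this.symm
  have hn : ∀ (n : ℕ) (x : V), c ((γ ^ n) x) = c x := by
    intro n
    induction n with
    | zero => simp
    | succ n ih =>
      intro x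
      rw [pow_succ, Equiv.Perm.mul_apply, ih, hγ]
  obtain ⟨i, _, hi⟩ := h.exists_pow_eq'
  rw [← hi, hn]

lemma weight_eq (γ : Equiv.Perm V) (w : Y → ℕ) (f : Quotient (scs γ) → Y) :
    ∑ v : V, w (f (Quotient.mk (scs γ) v))
      = ∑ q : Quotient (scs γ), (cls γ q).card * w (f q) := by
  rw [← Finset.sum_fiberwise_of_maps_to
    (g := Quotient.mk (scs γ)) (t := Finset.univ)
    (fun v _ => Finset.mem_univ _) (fun v => w (f (Quotient.mk (scs γ) v)))]
  refine Finset.sum_congr rfl fun q _ => ?_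
  have hfil : Finset.univ.filter (fun v : V => Quotient.mk (scs γ) v = q) = cls γ q := by
    ext v; simp [cls]
  rw [Finset.sum_congr hfil (fun v hv => by rw [mem_cls.1 hv]), Finset.sum_const,
    smul_eq_mul]

/-- The sum over fixed colorings of `γ`, expressed by the cycle index. -/
theorem fix_sum (γ : Equiv.Perm V) (w : Y → ℕ) :
    ∑ c ∈ Finset.univ.filter (fun c : V → Y => ∀ v, c (γ⁻¹ v) = c v),
        (X : Polynomial ℚ) ^ (∑ v : V, w (c v))
      = ∏ k ∈ Finset.range (Fintype.card V + 1),
          (∑ y : Y, (X : Polynomial ℚ) ^ (k * w y)) ^ cycleCount γ k := by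
  have h1 : ∑ c ∈ Finset.univ.filter (fun c : V → Y => ∀ v, c (γ⁻¹ v) = c v),
        (X : Polynomial ℚ) ^ (∑ v : V, w (c v))
      = ∑ f : Quotient (scs γ) → Y,
          (X : Polynomial ℚ) ^ (∑ q : Quotient (scs γ), (cls γ q).card * w (f q)) := by
    refine Finset.sum_nbij' (fun c => fun q => c q.out)
      (fun f => fun v => f (Quotient.mk (scs γ) v)) ?_ ?_ ?_ ?_ ?_
    · intro c _; exact Finset.mem_univ _
    · intro f _
      refine Finset.mem_filter.2 ⟨Finset.mem_univ _, fun v => ?_⟩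
      have hsc : γ.SameCycle (γ⁻¹ v) v := ⟨1, by simp⟩
      have : Quotient.mk (scs γ) (γ⁻¹ v) = Quotient.mk (scs γ) v := Quotient.sound hsc
      simp only [this]
    · intro c hc
      funext v
      have hc' := (Finset.mem_filter.1 hc).2
      exact fixed_const γ hc' (Quotient.exact (Quotient.out_eq (Quotient.mk (scs γ) v)))
    · intro f _
      funext q
      simp only [Quotient.out_eq]
    · intro c hc
      congr 1
      have hc' := (Finset.mem_filter.1 hc).2
      calc ∑ v : V, w (c v)
          = ∑ v : V, w (c (Quotient.mk (scs γ) v).out) := by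
            refine Finset.sum_congr rfl fun v _ => ?_
            congr 1
            exact (fixed_const γ hc'
              (Quotient.exact (Quotient.out_eq (Quotient.mk (scs γ) v)))).symm
        _ = ∑ q : Quotient (scs γ), (cls γ q).card * w (c q.out) :=
            weight_eq γ w (fun q => c q.out)
  rw [h1]
  have h2 : ∑ f : Quotient (scs γ) → Y,
        (X : Polynomial ℚ) ^ (∑ q : Quotient (scs γ), (cls γ q).card * w (f q))
      = ∏ q : Quotient (scs γ), ∑ y : Y, (X : Polynomial ℚ) ^ ((cls γ q).card * w y) := by
    rw [Finset.prod_univ_sum (fun _ => (Finset.univ : Finset Y))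
      (fun q y => (X : Polynomial ℚ) ^ ((cls γ q).card * w y)), Fintype.piFinset_univ]
    refine Finset.sum_congr rfl fun f _ => ?_
    rw [Finset.prod_pow_eq_pow_sum]
  rw [h2]
  rw [← Finset.prod_fiberwise_of_maps_to
    (g := fun q : Quotient (scs γ) => (cls γ q).card)
    (t := Finset.range (Fintype.card V + 1))
    (fun q _ => Finset.mem_range.2 (Nat.lt_succ_of_le (card_cls_le γ q)))
    (fun q => ∑ y : Y, (X : Polynomial ℚ) ^ ((cls γ q).card * w y))]
  refine Finset.prod_congr rfl fun k _ => ?_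
  rw [Finset.prod_congr rfl (fun q hq => ?_), Finset.prod_const, card_cls_filter]
  rw [(Finset.mem_filter.1 hq).2]

/-- The action of a permutation on colorings. -/
def pact {V Y : Type*} (γ : Equiv.Perm V) (c : V → Y) : V → Y := fun v => c (γ⁻¹ v)

lemma pact_mul {Y : Type*} (γ δ : Equiv.Perm V) (c : V → Y) :
    pact (γ * δ) c = pact γ (pact δ c) := by
  funext v
  simp [pact, mul_inv_rev]

lemma pact_one {Y : Type*} (c : V → Y) : pact (1 : Equiv.Perm V) c = c := by
  funext v; simp [pact]

lemma weight_pact (γ : Equiv.Perm V) (w : Y → ℕ) (c : V → Y) :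
    ∑ v : V, w (pact γ c v) = ∑ v : V, w (c v) :=
  Equiv.sum_comp (γ⁻¹ : Equiv.Perm V) (fun v => w (c v))

/-- Weighted Burnside lemma. -/
theorem burnside (H : Subgroup (Equiv.Perm V)) (w : Y → ℕ)
    (T : Finset (V → Y))
    (hT : ∀ c : V → Y, ∃! t : V → Y, t ∈ T ∧ ∃ γ ∈ H, pact γ c = t)
    (HF : Finset (Equiv.Perm V)) (hHF : ∀ γ, γ ∈ HF ↔ γ ∈ H) :
    ∑ γ ∈ HF, ∑ c ∈ Finset.univ.filter (fun c : V → Y => ∀ v, c (γ⁻¹ v) = c v),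
        (X : Polynomial ℚ) ^ (∑ v : V, w (c v))
      = HF.card • ∑ t ∈ T, (X : Polynomial ℚ) ^ (∑ v : V, w (t v)) := by
  set F : (V → Y) → Polynomial ℚ := fun c => (X : Polynomial ℚ) ^ (∑ v : V, w (c v))
    with hF
  -- representative function
  set R : (V → Y) → (V → Y) := fun c => (hT c).choose with hR
  have hRspec : ∀ c, R c ∈ T ∧ ∃ γ ∈ H, pact γ c = R c := fun c => (hT c).choose_spec.1
  have hRuniq : ∀ c y, (y ∈ T ∧ ∃ γ ∈ H, pact γ c = y) → y = R c :=
    fun c y h => (hT c).choose_spec.2 y h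
  have hfixiff : ∀ (γ : Equiv.Perm V) (c : V → Y),
      (∀ v, c (γ⁻¹ v) = c v) ↔ pact γ c = c := by
    intro γ c
    constructor
    · intro h; funext v; exact h v
    · intro h v; exact congrFun h v
  -- step 1 : swap the two sums
  have step1 : ∑ γ ∈ HF, ∑ c ∈ Finset.univ.filter
        (fun c : V → Y => ∀ v, c (γ⁻¹ v) = c v), F c
      = ∑ c : V → Y, (HF.filter fun γ => pact γ c = c).card • F c := by
    calc ∑ γ ∈ HF, ∑ c ∈ Finset.univ.filter
            (fun c : V → Y => ∀ v, c (γ⁻¹ v) = c v), F c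
        = ∑ γ ∈ HF, ∑ c : V → Y, if pact γ c = c then F c else 0 := by
          refine Finset.sum_congr rfl fun γ _ => ?_
          rw [Finset.sum_filter]
          refine Finset.sum_congr rfl fun c _ => ?_
          simp only [hfixiff γ c]
      _ = ∑ c : V → Y, ∑ γ ∈ HF, if pact γ c = c then F c else 0 := Finset.sum_comm
      _ = ∑ c : V → Y, (HF.filter fun γ => pact γ c = c).card • F c := by
          refine Finset.sum_congr rfl fun c _ => ?_
          rw [← Finset.sum_filter, Finset.sum_const]
  -- step 2 : regroup by representative
  have hRmem : ∀ c : V → Y, R c ∈ T := fun c => (hRspec c).1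
  have step2 : ∑ c : V → Y, (HF.filter fun γ => pact γ c = c).card • F c
      = ∑ t ∈ T, ∑ c ∈ Finset.univ.filter (fun c => R c = t),
          (HF.filter fun γ => pact γ c = c).card • F c := by
    rw [Finset.sum_fiberwise_of_maps_to (fun c _ => hRmem c)]
  -- invariance of the weight on orbits
  have hFinv : ∀ c : V → Y, F c = F (R c) := by
    intro c
    obtain ⟨γ, _, hγ⟩ := (hRspec c).2
    have hw : ∑ v : V, w (pact γ c v) = ∑ v : V, w (c v) := weight_pact γ w c
    rw [hγ] at hw
    show (X : Polynomial ℚ) ^ (∑ v : V, w (c v))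
        = (X : Polynomial ℚ) ^ (∑ v : V, w (R c v))
    rw [hw]
  -- the key counting fact
  have key : ∀ t ∈ T, ∑ c ∈ Finset.univ.filter (fun c => R c = t),
      (HF.filter fun γ => pact γ c = c).card = HF.card := by
    intro t ht
    have hRact : ∀ γ ∈ HF, R (pact γ t) = t := by
      intro γ hγ
      refine (hRuniq (pact γ t) t ⟨ht, γ⁻¹, H.inv_mem ((hHF γ).1 hγ), ?_⟩).symm
      rw [← pact_mul, inv_mul_cancel, pact_one]
    have h1 : HF.card = ∑ c ∈ Finset.univ.filter (fun c => R c = t),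
        (HF.filter fun γ => pact γ t = c).card :=
      Finset.card_eq_sum_card_fiberwise (f := fun γ => pact γ t)
        (fun γ hγ => Finset.mem_filter.2 ⟨Finset.mem_univ _, hRact γ hγ⟩)
    rw [h1]
    refine Finset.sum_congr rfl fun c hc => ?_
    have hct : R c = t := (Finset.mem_filter.1 hc).2
    obtain ⟨γ₀, hγ₀H, hγ₀⟩ := (hRspec c).2
    rw [hct] at hγ₀
    have ht' : pact γ₀⁻¹ t = c := by
      rw [← hγ₀, ← pact_mul, inv_mul_cancel, pact_one]
    refine Finset.card_nbij' (fun δ => δ * γ₀⁻¹) (fun γ => γ * γ₀) ?_ ?_ ?_ ?_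
    · intro δ hδ
      obtain ⟨hδHF, hδc⟩ := Finset.mem_filter.1 hδ
      refine Finset.mem_filter.2 ⟨(hHF _).2
        (H.mul_mem ((hHF δ).1 hδHF) (H.inv_mem hγ₀H)), ?_⟩
      rw [pact_mul, ht', hδc]
    · intro γ hγ
      obtain ⟨hγHF, hγt⟩ := Finset.mem_filter.1 hγ
      refine Finset.mem_filter.2 ⟨(hHF _).2 (H.mul_mem ((hHF γ).1 hγHF) hγ₀H), ?_⟩
      rw [pact_mul, hγ₀, hγt]
    · intro γ _; group
    · intro δ _; group
  calc ∑ γ ∈ HF, ∑ c ∈ Finset.univ.filter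
          (fun c : V → Y => ∀ v, c (γ⁻¹ v) = c v), F c
      = ∑ c : V → Y, (HF.filter fun γ => pact γ c = c).card • F c := step1
    _ = ∑ t ∈ T, ∑ c ∈ Finset.univ.filter (fun c => R c = t),
          (HF.filter fun γ => pact γ c = c).card • F c := step2
    _ = ∑ t ∈ T, HF.card • F t := by
        refine Finset.sum_congr rfl fun t ht => ?_
        calc ∑ c ∈ Finset.univ.filter (fun c => R c = t),
              (HF.filter fun γ => pact γ c = c).card • F c
            = ∑ c ∈ Finset.univ.filter (fun c => R c = t),
              (HF.filter fun γ => pact γ c = c).card • F t := by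
              refine Finset.sum_congr rfl fun c hc => ?_
              rw [hFinv c, (Finset.mem_filter.1 hc).2]
          _ = (∑ c ∈ Finset.univ.filter (fun c => R c = t),
              (HF.filter fun γ => pact γ c = c).card) • F t := by
              rw [Finset.sum_smul]
          _ = HF.card • F t := by rw [key t ht]
    _ = HF.card • ∑ t ∈ T, F t := (Finset.smul_sum).symm

end PolyaAux

open PolyaAux Finset Polynomial in
/-- Theorem (Pólya enumeration for a permutation group): let `H` be a finite group of
permutations of a finite set `V`, acting on colorings `c : V → Y` by `(γ·c)(v) = c(γ⁻¹(v))`,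
let `w : Y → ℕ` be a weight, and let `T` be a complete set of representatives of the orbits.
Then `Σ_{orbits} x^{W(rep)} = (1/|H|) Σ_{γ ∈ H} Π_k (Σ_{y ∈ Y} x^{k·w(y)})^{c_k(γ)}` in
`ℚ[x]`. -/
theorem polya_enumeration {V : Type*} [Fintype V] [DecidableEq V]
    {Y : Type*} [Fintype Y] [DecidableEq Y]
    (H : Subgroup (Equiv.Perm V)) (w : Y → ℕ)
    (T : Finset (V → Y))
    (hT : ∀ c : V → Y, ∃! t : V → Y, t ∈ T ∧ ∃ γ ∈ H, (fun v => c (γ⁻¹ v)) = t) :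
    ∑ c ∈ T, (Polynomial.X : Polynomial ℚ) ^ (∑ v : V, w (c v))
      = ((Nat.card H : ℚ))⁻¹ •
          ∑ᶠ γ ∈ (H : Set (Equiv.Perm V)),
            ∏ k ∈ Finset.range (Fintype.card V + 1),
              (∑ y : Y, (Polynomial.X : Polynomial ℚ) ^ (k * w y)) ^ cycleCount γ k := by
  classical
  have hfin : (H : Set (Equiv.Perm V)).Finite := Set.toFinite _
  set HF : Finset (Equiv.Perm V) := hfin.toFinset with hHFdef
  have hmem : ∀ γ, γ ∈ HF ↔ γ ∈ H := fun γ => by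
    rw [hHFdef, Set.Finite.mem_toFinset, SetLike.mem_coe]
  have hcoe : (H : Set (Equiv.Perm V)) = ↑HF := hfin.coe_toFinset.symm
  rw [hcoe, finsum_mem_coe_finset]
  have hsum : ∑ γ ∈ HF, ∏ k ∈ Finset.range (Fintype.card V + 1),
        (∑ y : Y, (Polynomial.X : Polynomial ℚ) ^ (k * w y)) ^ cycleCount γ k
      = HF.card • ∑ c ∈ T, (Polynomial.X : Polynomial ℚ) ^ (∑ v : V, w (c v)) := by
    rw [Finset.sum_congr rfl (fun γ _ => (fix_sum γ w).symm)]
    exact burnside H w T hT HF hmem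
  rw [hsum]
  have hcardH : Nat.card H = HF.card := by
    have h1 : Nat.card H = (H : Set (Equiv.Perm V)).ncard :=
      Nat.card_coe_set_eq (H : Set (Equiv.Perm V))
    rw [h1, Set.ncard_eq_toFinset_card _ hfin, hHFdef]
  have hcard0 : (HF.card : ℚ) ≠ 0 := by
    have : (1 : Equiv.Perm V) ∈ HF := (hmem 1).2 H.one_mem
    have hpos : 0 < HF.card := Finset.card_pos.2 ⟨1, this⟩
    exact_mod_cast hpos.ne'
  rw [hcardH, ← Nat.cast_smul_eq_nsmul ℚ, inv_smul_smul₀ hcard0]
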